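/- Let α be a unital partial action of G on A with enveloping global action (B,β) and embedding φ : A → B. The restriction map ρ : C^n(G, M(B)) → C^n_par(G,A), determined by φ(ρ(u)(g₁,…,g_n)) = φ(1_{(g₁,…,g_n)})·u(g₁,…,g_n), commutes with the coboundary operators: δ^n∘ρ = ρ∘δ^n, and hence induces group homomorphisms H^n(G, M(B)) → H^n_par(G,A) for all n ≥ 0. -/
import Mathlib


noncomputable section

/-- The multiplier algebra `M(B)` of a (non-necessarily unital) ring `B`: pairs of an
associated left multiplier `L` and right multiplier `R` with `(aR)b = a(Lb)`.
(Here `R b` is "`b` multiplied by the multiplier on the right".) -/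
@[ext]
structure Mult (B : Type*) [NonUnitalRing B] where
  L : B →+ B
  R : B →+ B
  mid : ∀ a b, R a * b = a * L b
  L_mul : ∀ a b, L (a * b) = L a * b
  R_mul : ∀ a b, R (a * b) = a * R b

namespace Mult

variable {B : Type*} [NonUnitalRing B]

instance : Add (Mult B) :=
  ⟨fun u v => ⟨u.L + v.L, u.R + v.R,
    fun a b => by simp [add_mul, mul_add, u.mid, v.mid],
    fun a b => by simp [u.L_mul, v.L_mul, add_mul],
    fun a b => by simp [u.R_mul, v.R_mul, mul_add]⟩⟩

instance : Zero (Mult B) := ⟨⟨0, 0, by simp, by simp, by simp⟩⟩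

instance : Neg (Mult B) :=
  ⟨fun u => ⟨-u.L, -u.R,
    fun a b => by simp [u.mid],
    fun a b => by simp [u.L_mul],
    fun a b => by simp [u.R_mul]⟩⟩

@[simp] lemma add_L (u v : Mult B) : (u + v).L = u.L + v.L := rfl
@[simp] lemma add_R (u v : Mult B) : (u + v).R = u.R + v.R := rfl
@[simp] lemma zero_L : (0 : Mult B).L = 0 := rfl
@[simp] lemma zero_R : (0 : Mult B).R = 0 := rfl
@[simp] lemma neg_L (u : Mult B) : (-u).L = -u.L := rfl
@[simp] lemma neg_R (u : Mult B) : (-u).R = -u.R := rfl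

instance : AddCommGroup (Mult B) where
  nsmul := nsmulRec
  zsmul := zsmulRec
  add_assoc a b c := by ext x <;> simp [add_assoc]
  zero_add a := by ext x <;> simp
  add_zero a := by ext x <;> simp
  add_comm a b := by ext x <;> simp [add_comm]
  neg_add_cancel a := by ext x <;> simp

/-- The action `β*` of a ring automorphism `f` of `B` on multipliers:
`β*(u) = f ∘ u ∘ f⁻¹` (componentwise). -/
def conj (f : B ≃+* B) (u : Mult B) : Mult B where
  L := (f.toAddEquiv.toAddMonoidHom.comp u.L).comp f.symm.toAddEquiv.toAddMonoidHom
  R := (f.toAddEquiv.toAddMonoidHom.comp u.R).comp f.symm.toAddEquiv.toAddMonoidHom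
  mid a b := by
    show f (u.R (f.symm a)) * b = a * f (u.L (f.symm b))
    conv_lhs => rw [← f.apply_symm_apply b]
    rw [← map_mul f, u.mid, map_mul f, f.apply_symm_apply]
  L_mul a b := by
    show f (u.L (f.symm (a * b))) = f (u.L (f.symm a)) * b
    rw [map_mul f.symm, u.L_mul, map_mul f, f.apply_symm_apply]
  R_mul a b := by
    show f (u.R (f.symm (a * b))) = a * f (u.R (f.symm b))
    rw [map_mul f.symm, u.R_mul, map_mul f, f.apply_symm_apply]

end Mult

/-- The idempotent `1_{(g₁,…,g_n)} = 1_{g₁} 1_{g₁g₂} ⋯ 1_{g₁⋯g_n}` of `A`. -/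
def oneT {G : Type*} [Group G] {A : Type*} [Ring A] (e : G → A) {n : ℕ}
    (v : Fin n → G) : A :=
  (List.ofFn fun i : Fin n => e (Fin.partialProd v i.succ)).prod

/-- The classical coboundary on cochains with values in the additive group of `M(B)`,
with respect to the action `β*`. -/
def deltaMult {G : Type*} [Group G] {B : Type*} [NonUnitalRing B]
    (βe : G → B ≃+* B) {n : ℕ} (u : (Fin n → G) → Mult B) :
    (Fin (n + 1) → G) → Mult B := fun v =>
  Mult.conj (βe (v 0)) (u (Fin.tail v)) +
    ∑ j : Fin (n + 1), (-1 : ℤ) ^ ((j : ℕ) + 1) • u (Fin.contractNth j (· * ·) v)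

/-- The partial coboundary `δⁿ` on `C^n_par(G, A)`. -/
def deltaPar {G : Type*} [Group G] {A : Type*} [Ring A]
    (e : G → A) (act : G → A → A) {n : ℕ} (w : (Fin n → G) → A) :
    (Fin (n + 1) → G) → A := fun v =>
  act (v 0) (e (v 0)⁻¹ * w (Fin.tail v)) +
    ∑ j : Fin (n + 1), (-1 : ℤ) ^ ((j : ℕ) + 1) •
      (e (Fin.partialProd v j.succ) * w (Fin.contractNth j (· * ·) v))


namespace Mult
variable {B : Type*} [NonUnitalRing B]

/-- Evaluation of the right-multiplier component at a fixed element, as an additive map. -/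
def evalR (b : B) : Mult B →+ B where
  toFun u := u.R b
  map_zero' := rfl
  map_add' _ _ := rfl

end Mult

set_option linter.unusedSectionVars false

section AuxHelpers
variable {G : Type*} [Group G] {A : Type*} [Ring A]

theorem myActA (e : G → A) (act : G → A → A)
    (he_idem : ∀ g, e g * e g = e g)
    (hact_one : ∀ a, act 1 a = a)
    (hrange : ∀ g a, e g * act g (e g⁻¹ * a) = act g (e g⁻¹ * a))
    (hcomp : ∀ g h a, e h⁻¹ * a = a → e g⁻¹ * act h a = act h a →
      e (g * h)⁻¹ * a = a ∧ act g (act h a) = act (g * h) a)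
    (g : G) (x : A) : act g (act g⁻¹ (e g * x)) = e g * x := by
  have h1 : e (g⁻¹)⁻¹ * (e g * x) = e g * x := by rw [inv_inv, ← mul_assoc, he_idem]
  have h2 : e g⁻¹ * act g⁻¹ (e g * x) = act g⁻¹ (e g * x) := by
    have := hrange g⁻¹ x; rwa [inv_inv] at this
  have h3 := (hcomp g g⁻¹ (e g * x) h1 h2).2
  rwa [mul_inv_cancel, hact_one] at h3

theorem myLemB (e : G → A) (act : G → A → A)
    (he_central : ∀ g a, e g * a = a * e g)
    (he_idem : ∀ g, e g * e g = e g)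
    (hact_one : ∀ a, act 1 a = a)
    (hrange : ∀ g a, e g * act g (e g⁻¹ * a) = act g (e g⁻¹ * a))
    (hcomp : ∀ g h a, e h⁻¹ * a = a → e g⁻¹ * act h a = act h a →
      e (g * h)⁻¹ * a = a ∧ act g (act h a) = act (g * h) a)
    (g h : G) : e (g * h) * act g (e g⁻¹ * e h) = act g (e g⁻¹ * e h) := by
  set z := act h⁻¹ (e h * e g⁻¹) with hz
  have hz1 : e h⁻¹ * z = z := by
    have := hrange h⁻¹ (e g⁻¹); rwa [inv_inv] at this
  have hz2 : act h z = e h * e g⁻¹ :=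
    myActA e act he_idem hact_one hrange hcomp h (e g⁻¹)
  have hz3 : e g⁻¹ * act h z = act h z := by
    rw [hz2, ← mul_assoc, he_central g⁻¹ (e h), mul_assoc, he_idem]
  obtain ⟨hz4, hz5⟩ := hcomp g h z hz1 hz3
  have key : act g (e g⁻¹ * e h) = act (g * h) z := by
    rw [he_central g⁻¹ (e h), ← hz2, hz5]
  rw [key, ← hz4]
  exact hrange (g * h) z

theorem myRearr (e : G → A)
    (he_central : ∀ g a, e g * a = a * e g)
    (he_idem : ∀ g, e g * e g = e g)
    (x y : G) (P : A) : (e x * e y) * (e x * P) = e x * (e y * P) := by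
  rw [mul_assoc, ← mul_assoc (e y), ← he_central x (e y), mul_assoc, ← mul_assoc, he_idem]

theorem myLemC (e : G → A) (act : G → A → A)
    (he_central : ∀ g a, e g * a = a * e g)
    (he_idem : ∀ g, e g * e g = e g)
    (hact_one : ∀ a, act 1 a = a)
    (hrange : ∀ g a, e g * act g (e g⁻¹ * a) = act g (e g⁻¹ * a))
    (hmul : ∀ g a b, act g ((e g⁻¹ * a) * (e g⁻¹ * b)) = act g (e g⁻¹ * a) * act g (e g⁻¹ * b))
    (hcomp : ∀ g h a, e h⁻¹ * a = a → e g⁻¹ * act h a = act h a →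
      e (g * h)⁻¹ * a = a ∧ act g (act h a) = act (g * h) a)
    (g h : G) : act g (e g⁻¹ * e h) = e g * e (g * h) := by
  set w := act g⁻¹ (e g * e (g * h)) with hwdef
  have hw1 : e g⁻¹ * w = w := by
    have := hrange g⁻¹ (e (g * h)); rwa [inv_inv] at this
  have hw2 : act g w = e g * e (g * h) :=
    myActA e act he_idem hact_one hrange hcomp g (e (g * h))
  have hw3 : e h * w = w := by
    have := myLemB e act he_central he_idem hact_one hrange hcomp g⁻¹ (g * h)
    rwa [inv_inv, inv_mul_cancel_left] at this
  have h2 : (e g⁻¹ * e h) * (e g⁻¹ * w) = w := by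
    rw [hw1, mul_assoc, hw3, hw1]
  have h1 := hmul g (e h) w
  rw [h2, hw1, hw2] at h1
  -- h1 : e g * e (g * h) = act g (e g⁻¹ * e h) * (e g * e (g * h))
  have hyg : e g * act g (e g⁻¹ * e h) = act g (e g⁻¹ * e h) := hrange g (e h)
  have hygh : e (g * h) * act g (e g⁻¹ * e h) = act g (e g⁻¹ * e h) :=
    myLemB e act he_central he_idem hact_one hrange hcomp g h
  have h3 : act g (e g⁻¹ * e h) * (e g * e (g * h)) = act g (e g⁻¹ * e h) := by
    rw [← mul_assoc, ← he_central g (act g (e g⁻¹ * e h)), hyg,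
      ← he_central (g * h) (act g (e g⁻¹ * e h)), hygh]
  exact h3.symm.trans h1.symm

theorem myLemE (e : G → A) (act : G → A → A)
    (he_central : ∀ g a, e g * a = a * e g)
    (he_idem : ∀ g, e g * e g = e g)
    (he_one : e 1 = 1)
    (hact_one : ∀ a, act 1 a = a)
    (hrange : ∀ g a, e g * act g (e g⁻¹ * a) = act g (e g⁻¹ * a))
    (hmul : ∀ g a b, act g ((e g⁻¹ * a) * (e g⁻¹ * b)) = act g (e g⁻¹ * a) * act g (e g⁻¹ * b))
    (hcomp : ∀ g h a, e h⁻¹ * a = a → e g⁻¹ * act h a = act h a →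
      e (g * h)⁻¹ * a = a ∧ act g (act h a) = act (g * h) a)
    (g : G) : act g (e g⁻¹) = e g := by
  have := myLemC e act he_central he_idem hact_one hrange hmul hcomp g 1
  rw [he_one, mul_one, mul_one, he_idem] at this
  exact this

theorem myLemProd (e : G → A) (act : G → A → A)
    (he_central : ∀ g a, e g * a = a * e g)
    (he_idem : ∀ g, e g * e g = e g)
    (he_one : e 1 = 1)
    (hact_one : ∀ a, act 1 a = a)
    (hrange : ∀ g a, e g * act g (e g⁻¹ * a) = act g (e g⁻¹ * a))
    (hmul : ∀ g a b, act g ((e g⁻¹ * a) * (e g⁻¹ * b)) = act g (e g⁻¹ * a) * act g (e g⁻¹ * b))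
    (hcomp : ∀ g h a, e h⁻¹ * a = a → e g⁻¹ * act h a = act h a →
      e (g * h)⁻¹ * a = a ∧ act g (act h a) = act (g * h) a)
    (g : G) : ∀ l : List G,
      act g (e g⁻¹ * (l.map e).prod) = e g * (l.map fun k => e (g * k)).prod := by
  intro l
  induction l with
  | nil =>
    simp only [List.map_nil, List.prod_nil, mul_one]
    exact myLemE e act he_central he_idem he_one hact_one hrange hmul hcomp g
  | cons k t ih =>
    simp only [List.map_cons, List.prod_cons]
    rw [← myRearr e he_central he_idem g⁻¹ k ((t.map e).prod), hmul, ih,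
      myLemC e act he_central he_idem hact_one hrange hmul hcomp g k,
      myRearr e he_central he_idem g (g * k)]


theorem myPPContract (v : Fin (n + 1) → G) (j : Fin (n + 1)) (k : Fin (n + 1)) :
    Fin.partialProd (Fin.contractNth j (· * ·) v) k =
      Fin.partialProd v ((j.succ : Fin (n + 2)).succAbove k) := by
  induction k using Fin.induction with
  | zero => simp
  | succ k ih =>
    rw [Fin.partialProd_succ, ih, ← Fin.inv_partialProd_mul_eq_contractNth,
      mul_inv_cancel_left, ← Fin.succ_succAbove_succ]

theorem myCentralExtract : ∀ (n : ℕ) (c : Fin (n + 1) → A)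
    (_ : ∀ i a, c i * a = a * c i) (j : Fin (n + 1)),
    (List.ofFn c).prod = c j * (List.ofFn fun k : Fin n => c (j.succAbove k)).prod := by
  intro n
  induction n with
  | zero =>
    intro c hc j
    fin_cases j <;> simp
  | succ n IH =>
    intro c hc j
    induction j using Fin.cases with
    | zero => simp [List.ofFn_succ]
    | succ j' =>
      rw [List.ofFn_succ, List.prod_cons,
        IH (fun i => c i.succ) (fun i a => hc i.succ a) j']
      have h0 : (fun k : Fin (n + 1) => c (j'.succ.succAbove k)) 0 = c 0 := by
        simp
      rw [show (List.ofFn fun k : Fin (n + 1) => c (j'.succ.succAbove k)) =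
          c 0 :: List.ofFn fun k : Fin n => c ((j'.succAbove k).succ) by
        rw [List.ofFn_succ]
        simp [Fin.succ_succAbove_succ]]
      rw [List.prod_cons, ← mul_assoc, ← mul_assoc, hc j'.succ (c 0)]

theorem myStep2 (e : G → A) (he_central : ∀ g a, e g * a = a * e g)
    {n : ℕ} (v : Fin (n + 1) → G) (j : Fin (n + 1)) :
    e (Fin.partialProd v j.succ) * oneT e (Fin.contractNth j (· * ·) v) = oneT e v := by
  unfold oneT
  have := myCentralExtract n (fun i : Fin (n + 1) => e (Fin.partialProd v i.succ))
    (fun i a => he_central _ a) j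
  rw [this]
  congr 2
  exact congrArg List.ofFn (funext fun k => by
    rw [myPPContract v j k.succ, Fin.succ_succAbove_succ])

theorem myStep1 (e : G → A) (act : G → A → A)
    (he_central : ∀ g a, e g * a = a * e g)
    (he_idem : ∀ g, e g * e g = e g)
    (he_one : e 1 = 1)
    (hact_one : ∀ a, act 1 a = a)
    (hrange : ∀ g a, e g * act g (e g⁻¹ * a) = act g (e g⁻¹ * a))
    (hmul : ∀ g a b, act g ((e g⁻¹ * a) * (e g⁻¹ * b)) = act g (e g⁻¹ * a) * act g (e g⁻¹ * b))
    (hcomp : ∀ g h a, e h⁻¹ * a = a → e g⁻¹ * act h a = act h a →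
      e (g * h)⁻¹ * a = a ∧ act g (act h a) = act (g * h) a)
    {n : ℕ} (v : Fin (n + 1) → G) :
    act (v 0) (e (v 0)⁻¹ * oneT e (Fin.tail v)) = oneT e v := by
  have htail : oneT e (Fin.tail v) =
      ((List.ofFn fun i : Fin n => (v 0)⁻¹ * Fin.partialProd v i.succ.succ).map e).prod := by
    unfold oneT
    rw [List.map_ofFn]
    congr 1
    exact congrArg List.ofFn (funext fun i => by
      show e (Fin.partialProd (Fin.tail v) i.succ) = e ((v 0)⁻¹ * Fin.partialProd v i.succ.succ)
      rw [Fin.partialProd_succ' v i.succ, inv_mul_cancel_left])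
  rw [htail, myLemProd e act he_central he_idem he_one hact_one hrange hmul hcomp (v 0)]
  unfold oneT
  rw [List.ofFn_succ, List.prod_cons, List.map_ofFn]
  congr 1
  · have : Fin.partialProd v (0 : Fin (n + 1)).succ = v 0 := by
      rw [Fin.partialProd_succ' v 0, Fin.partialProd_zero, mul_one]
    rw [← this]
  · congr 1
    exact congrArg List.ofFn (funext fun i => by
      show e (v 0 * ((v 0)⁻¹ * Fin.partialProd v i.succ.succ)) = _
      rw [mul_inv_cancel_left])

end AuxHelpers

/-- The restriction map `ρ : C^n(G, M(B)) → C^n_par(G, A)` (determined by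
`φ(ρ(u)(g₁,…,g_n)) = φ(1_{(g₁,…,g_n)})·u(g₁,…,g_n)`) commutes with the coboundary
operators: if `w = ρ(u)` and `w' = ρ(δⁿu)` then `w' = δⁿw`.  (Hence it induces
homomorphisms `Hⁿ(G, M(B)) → Hⁿ_par(G, A)`.) -/
theorem restriction_commutes_with_coboundary
    {G : Type*} [Group G] {A : Type*} [Ring A] {B : Type*} [NonUnitalRing B]
    (e : G → A) (act : G → A → A)
    (he_central : ∀ g a, e g * a = a * e g)
    (he_idem : ∀ g, e g * e g = e g)
    (he_one : e 1 = 1)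
    (hact_one : ∀ a, act 1 a = a)
    (hrange : ∀ g a, e g * act g (e g⁻¹ * a) = act g (e g⁻¹ * a))
    (hadd : ∀ g a b, act g (e g⁻¹ * a + e g⁻¹ * b) = act g (e g⁻¹ * a) + act g (e g⁻¹ * b))
    (hmul : ∀ g a b, act g ((e g⁻¹ * a) * (e g⁻¹ * b)) = act g (e g⁻¹ * a) * act g (e g⁻¹ * b))
    (hbij : ∀ g, Set.BijOn (act g) {x | e g⁻¹ * x = x} {x | e g * x = x})
    (hcomp : ∀ g h a, e h⁻¹ * a = a → e g⁻¹ * act h a = act h a →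
      e (g * h)⁻¹ * a = a ∧ act g (act h a) = act (g * h) a)
    (βe : G → B ≃+* B)
    (hβ1 : ∀ b, βe 1 b = b)
    (hβmul : ∀ g h b, βe (g * h) b = βe g (βe h b))
    (φ : A →ₙ+* B) (hφinj : Function.Injective φ)
    (hφideal : ∀ (b : B) (a : A), b * φ a ∈ Set.range φ ∧ φ a * b ∈ Set.range φ)
    (hφmor : ∀ g a, φ (act g (e g⁻¹ * a)) = βe g (φ (e g⁻¹ * a))) :
    ∀ (n : ℕ) (u : (Fin n → G) → Mult B) (w : (Fin n → G) → A),
      (∀ v, φ (w v) = (u v).R (φ (oneT e v))) →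
      ∀ w' : (Fin (n + 1) → G) → A,
        (∀ v, φ (w' v) = ((deltaMult βe u) v).R (φ (oneT e v))) →
        ∀ v, w' v = deltaPar e act w v := by
  intro n u w hw w' hw' v
  apply hφinj
  rw [hw' v]
  have hL : ((deltaMult βe u) v).R (φ (oneT e v)) =
      (Mult.conj (βe (v 0)) (u (Fin.tail v))).R (φ (oneT e v)) +
        ∑ j : Fin (n + 1), (-1 : ℤ) ^ ((j : ℕ) + 1) •
          ((u (Fin.contractNth j (· * ·) v)).R (φ (oneT e v))) := by
    show Mult.evalR (φ (oneT e v)) ((deltaMult βe u) v) = _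
    simp only [deltaMult, map_add, map_sum, map_zsmul]
    rfl
  have hR : φ (deltaPar e act w v) =
      φ (act (v 0) (e (v 0)⁻¹ * w (Fin.tail v))) +
        ∑ j : Fin (n + 1), (-1 : ℤ) ^ ((j : ℕ) + 1) •
          (φ (e (Fin.partialProd v j.succ)) * φ (w (Fin.contractNth j (· * ·) v))) := by
    simp only [deltaPar, map_add, map_sum, map_zsmul, map_mul]
  rw [hL, hR]
  have key0 : φ (e (v 0)⁻¹ * oneT e (Fin.tail v)) = (βe (v 0)).symm (φ (oneT e v)) := by
    have h1 : βe (v 0) (φ (e (v 0)⁻¹ * oneT e (Fin.tail v))) = φ (oneT e v) := by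
      rw [← hφmor, myStep1 e act he_central he_idem he_one hact_one hrange hmul hcomp v]
    rw [← h1, RingEquiv.symm_apply_apply]
  congr 1
  · show βe (v 0) ((u (Fin.tail v)).R ((βe (v 0)).symm (φ (oneT e v)))) = _
    rw [hφmor (v 0) (w (Fin.tail v))]
    congr 1
    rw [← key0, map_mul, map_mul φ (e (v 0)⁻¹) (w (Fin.tail v)), hw (Fin.tail v),
      Mult.R_mul]
  · refine Finset.sum_congr rfl fun j _ => ?_
    congr 1
    rw [hw (Fin.contractNth j (· * ·) v), ← Mult.R_mul, ← map_mul,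
      myStep2 e he_central v j]

end
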